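/- Let F : ℝ → ℝ be defined by F(x) = e^{(1+x)²/2}·∫_0^x e^{−(1+t)²/2} dt. Then for every n ≥ 0, the n-th derivative F^{(n)}(0) is a nonnegative integer. -/

import Mathlib

/-- `ConsecOcc p π i`: the word `π(i) π(i+1) … π(i+r-1)` (positions `0`-indexed)
is order-isomorphic to the pattern word `p 0, …, p (r-1)`. -/
def ConsecOcc {n r : ℕ} (p : Fin r → ℕ) (π : Equiv.Perm (Fin n)) (i : ℕ) : Prop :=
  ∃ h : i + r ≤ n, ∀ j k : Fin r,
    (π ⟨i + j.val, by have := j.isLt; omega⟩ < π ⟨i + k.val, by have := k.isLt; omega⟩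
      ↔ p j < p k)

/-- The number of consecutive occurrences of the pattern `p` in `π`. -/
noncomputable def occCount {n r : ℕ} (p : Fin r → ℕ) (π : Equiv.Perm (Fin n)) : ℕ :=
  Nat.card {i : ℕ // ConsecOcc p π i}

/-- `π` has no consecutive occurrence of any pattern in `ps`. -/
def AvoidsAll {n r : ℕ} (ps : List (Fin r → ℕ)) (π : Equiv.Perm (Fin n)) : Prop :=
  ∀ p ∈ ps, ∀ i, ¬ ConsecOcc p π i

-- Total number of consecutive occurrences of `p` over all size-`n` permutations satisfying `P`.
open scoped Classical in
noncomputable def totOcc {n r : ℕ} (p : Fin r → ℕ) (P : Equiv.Perm (Fin n) → Prop) : ℕ :=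
  ∑ π : Equiv.Perm (Fin n), if P π then occCount p π else 0

/-- The number of size-`n` permutations satisfying `P`. -/
noncomputable def classCard (n : ℕ) (P : Equiv.Perm (Fin n) → Prop) : ℕ :=
  Nat.card {π : Equiv.Perm (Fin n) // P π}

def p123 : Fin 3 → ℕ := ![1,2,3]
def p132 : Fin 3 → ℕ := ![1,3,2]
def p213 : Fin 3 → ℕ := ![2,1,3]
def p231 : Fin 3 → ℕ := ![2,3,1]
def p312 : Fin 3 → ℕ := ![3,1,2]
def p321 : Fin 3 → ℕ := ![3,2,1]

noncomputable def Ffun (x : ℝ) : ℝ :=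
  Real.exp ((1+x)^2/2) * ∫ t in (0:ℝ)..x, Real.exp (-((1+t)^2)/2)

open Polynomial

lemma Ffun_hasDerivAt (x : ℝ) : HasDerivAt Ffun ((1+x) * Ffun x + 1) x := by
  have hc : Continuous fun t : ℝ => Real.exp (-((1+t)^2)/2) := by continuity
  have hG : HasDerivAt (fun y : ℝ => ∫ t in (0:ℝ)..y, Real.exp (-((1+t)^2)/2))
      (Real.exp (-((1+x)^2)/2)) x := (hc.integral_hasStrictDerivAt 0 x).hasDerivAt
  have hu : HasDerivAt (fun y : ℝ => (1+y)^2/2) (1+x) x := by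
    have : HasDerivAt (fun y : ℝ => (1+y)^2/2) ((2*(1+x)^(2-1)*1)/2) x := by
      exact (((hasDerivAt_id x).const_add 1).pow 2).div_const 2
    simpa using this
  have hE : HasDerivAt (fun y : ℝ => Real.exp ((1+y)^2/2))
      ((1+x) * Real.exp ((1+x)^2/2)) x := by
    simpa [mul_comm] using hu.exp
  have : HasDerivAt (fun y => Real.exp ((1+y)^2/2) * ∫ t in (0:ℝ)..y, Real.exp (-((1+t)^2)/2)) _ x :=
    hE.mul hG
  have hone : Real.exp ((1+x)^2/2) * Real.exp (-((1+x)^2)/2) = 1 := by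
    rw [← Real.exp_add]; ring_nf; exact Real.exp_zero
  refine this.congr_deriv ?_
  simp only [Ffun]
  rw [hone]
  ring


noncomputable def Pn : ℕ → Polynomial ℕ
  | 0 => 1
  | n+1 => derivative (Pn n) + (X + 1) * Pn n

noncomputable def Qn : ℕ → Polynomial ℕ
  | 0 => 0
  | n+1 => derivative (Qn n) + Pn n

noncomputable def rp (p : Polynomial ℕ) : Polynomial ℝ := p.map (Nat.castRingHom ℝ)

lemma key (n : ℕ) : iteratedDeriv n Ffun =
    fun x => (rp (Pn n)).eval x * Ffun x + (rp (Qn n)).eval x := by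
  induction n with
  | zero => funext x; simp [Pn, Qn, rp, iteratedDeriv_zero]
  | succ n ih =>
    funext x
    rw [iteratedDeriv_succ, ih]
    have h : HasDerivAt (fun x => (rp (Pn n)).eval x * Ffun x + (rp (Qn n)).eval x)
        ((derivative (rp (Pn n))).eval x * Ffun x
          + (rp (Pn n)).eval x * ((1+x) * Ffun x + 1)
          + (derivative (rp (Qn n))).eval x) x :=
      (((rp (Pn n)).hasDerivAt x).mul (Ffun_hasDerivAt x)).add ((rp (Qn n)).hasDerivAt x)
    rw [h.deriv]
    simp only [rp, Pn, Qn, Polynomial.map_add, Polynomial.map_mul, Polynomial.map_one,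
      Polynomial.map_X, derivative_map, eval_add, eval_mul, eval_X, eval_one]
    ring

theorem stmt14 (n : ℕ) : ∃ m : ℕ, iteratedDeriv n Ffun 0 = (m : ℝ) := by
  refine ⟨(Qn n).coeff 0, ?_⟩
  rw [key n]
  have h0 : Ffun 0 = 0 := by simp [Ffun]
  simp [h0, rp, eval_map, eval₂_at_zero]
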